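/- Let a ∈ (0,1), and let w = w_{b_a} solve r w = (μ - α((1-x)^+))w' + (σ²/2)w'' on [a, b_a] with w(a)=a, w'(a)=1, w'(b_a)=1, w''(b_a)=0, b_a > 1, and suppose w is convex-concave on [a,b_a]. Then w'(x) > 1 for all x ∈ (a, b_a), hence w(x) > x on (a, b_a], and b_a < μ/r. -/

import Mathlib

open Set

theorem stmt_13 (μ σ r : ℝ) (hσ : 0 < σ) (hr : 0 < r) (hμr : r < μ)
    (α : ℝ → ℝ) (hα : ContDiff ℝ 1 α) (hαconv : ConvexOn ℝ (Ici 0) α)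
    (hαmono : StrictMonoOn α (Ici 0)) (hα0 : α 0 = 0)
    (hα' : ∀ x ≥ (0:ℝ), r ≤ deriv α x)
    (a b : ℝ) (ha : a ∈ Ioo (0:ℝ) 1) (hb : 1 < b) (hab : a < b)
    (w : ℝ → ℝ) (hw : ContDiff ℝ 2 w)
    (hode : ∀ x ∈ Icc a b,
      r * w x = (μ - α (max (1 - x) 0)) * deriv w x + σ ^ 2 / 2 * deriv (deriv w) x)
    (hwa : w a = a) (hw'a : deriv w a = 1)
    (hw'b : deriv w b = 1) (hw''b : deriv (deriv w) b = 0)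
    (hcc : ∃ c ∈ Ioo a b, (∀ x ∈ Ioo a c, 0 < deriv (deriv w) x) ∧
      (∀ x ∈ Ioo c b, deriv (deriv w) x < 0)) :
    (∀ x ∈ Ioo a b, 1 < deriv w x) ∧ (∀ x ∈ Ioc a b, x < w x) ∧ b < μ / r := by
  have hd1 : Differentiable ℝ w := hw.differentiable (by norm_num)
  have hw2 : ContDiff ℝ ((1 : WithTop ℕ∞) + 1) w := by norm_num; exact hw
  have hd2 : Differentiable ℝ (deriv w) :=
    ((contDiff_succ_iff_deriv.mp hw2).2.2).differentiable (by norm_num)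
  obtain ⟨c, hc, hpos, hneg⟩ := hcc
  have hmono : StrictMonoOn (deriv w) (Icc a c) := by
    apply strictMonoOn_of_deriv_pos (convex_Icc a c) hd2.continuous.continuousOn
    intro x hx
    rw [interior_Icc] at hx
    exact hpos x hx
  have hanti : StrictAntiOn (deriv w) (Icc c b) := by
    apply strictAntiOn_of_deriv_neg (convex_Icc c b) hd2.continuous.continuousOn
    intro x hx
    rw [interior_Icc] at hx
    exact hneg x hx
  have h1 : ∀ x ∈ Ioo a b, 1 < deriv w x := by
    intro x hx
    rcases le_or_gt x c with h | h
    · have := hmono ⟨le_rfl, hc.1.le⟩ ⟨hx.1.le, h⟩ hx.1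
      rwa [hw'a] at this
    · have := hanti ⟨h.le, hx.2.le⟩ ⟨hc.2.le, le_rfl⟩ hx.2
      rwa [hw'b] at this
  have h2 : ∀ x ∈ Ioc a b, x < w x := by
    have hg : StrictMonoOn (fun x => w x - x) (Icc a b) := by
      apply strictMonoOn_of_deriv_pos (convex_Icc a b)
        (hd1.continuous.sub continuous_id).continuousOn
      intro x hx
      rw [interior_Icc] at hx
      rw [deriv_sub (hd1 x) differentiableAt_id]
      rw [deriv_id]
      linarith [h1 x hx]
    intro x hx
    have := hg ⟨le_rfl, hab.le⟩ ⟨hx.1.le, hx.2⟩ hx.1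
    simp only [hwa, sub_self] at this
    linarith
  refine ⟨h1, h2, ?_⟩
  have hode_b := hode b ⟨hab.le, le_rfl⟩
  have hmax : max (1 - b) 0 = 0 := by
    apply max_eq_right; linarith
  rw [hmax, hα0, hw'b, hw''b] at hode_b
  have hwb : w b = μ / r := by field_simp; linarith
  have := h2 b ⟨hab, le_rfl⟩
  linarith [hwb ▸ this]
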